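/- Let L > 0 and 0 < ε < L/2. Then for all x ∈ [ε, L−ε] and all t with 0 < t ≤ (L−2ε)²/4, one has ∫_ε^{L−ε} p(t, x, y)² dy ≥ e^{−1/2}/(4π√t). -/

import Mathlib

noncomputable def pG (t x y : ℝ) : ℝ :=
  Real.exp (-(x - y) ^ 2 / (4 * t)) / Real.sqrt (4 * Real.pi * t)

theorem stmt_18 (L ε : ℝ) (hL : 0 < L) (hε : 0 < ε) (hεL : ε < L / 2) :
    ∀ x ∈ Set.Icc ε (L - ε), ∀ t : ℝ, 0 < t → t ≤ (L - 2 * ε) ^ 2 / 4 →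
      (∫ y in ε..(L - ε), (pG t x y) ^ 2) ≥ Real.exp (-1 / 2) / (4 * Real.pi * Real.sqrt t) := by
  intro x hx t ht ht2
  have hπ : 0 < Real.pi := Real.pi_pos
  have h4t : 0 < 4 * Real.pi * t := by positivity
  set s := Real.sqrt t with hs
  have hsp : 0 < s := Real.sqrt_pos.mpr ht
  have hst : s ^ 2 = t := Real.sq_sqrt ht.le
  have hs2 : s ≤ (L - 2 * ε) / 2 := by
    have h1 : (0:ℝ) ≤ (L - 2 * ε) / 2 := by linarith
    calc s ≤ Real.sqrt ((L - 2 * ε) ^ 2 / 4) := Real.sqrt_le_sqrt ht2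
      _ = (L - 2 * ε) / 2 := by
          rw [show (L - 2 * ε) ^ 2 / 4 = ((L - 2 * ε) / 2) ^ 2 by ring, Real.sqrt_sq h1]
  obtain ⟨hx1, hx2⟩ := hx
  obtain ⟨a, ha1, ha2, ha3, ha4⟩ : ∃ a, ε ≤ a ∧ a + s ≤ L - ε ∧ a ≤ x ∧ x ≤ a + s := by
    rcases le_total x (L / 2) with h | h
    · exact ⟨x, hx1, by linarith, le_refl x, by linarith⟩
    · exact ⟨x - s, by linarith, by linarith, by linarith, le_of_eq (by ring)⟩
  have hc : Continuous fun y => (pG t x y) ^ 2 := by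
    unfold pG
    fun_prop
  have hnn : ∀ y : ℝ, 0 ≤ (pG t x y) ^ 2 := fun y => sq_nonneg _
  set c := Real.exp (-1 / 2) / (4 * Real.pi * t) with hc'
  have key : ∀ y ∈ Set.Icc a (a + s), c ≤ (pG t x y) ^ 2 := by
    intro y hy
    have habs : |x - y| ≤ s := abs_le.mpr ⟨by linarith [hy.2], by linarith [hy.1]⟩
    have h1 : (x - y) ^ 2 ≤ t := by
      have := sq_abs (x - y)
      nlinarith [abs_nonneg (x - y)]
    have hpg : (pG t x y) ^ 2 = Real.exp (-(x - y) ^ 2 / (2 * t)) / (4 * Real.pi * t) := by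
      unfold pG
      rw [div_pow, Real.sq_sqrt h4t.le, sq, ← Real.exp_add]
      congr 2
      field_simp
      ring
    rw [hpg, hc']
    have hexp : Real.exp (-1 / 2) ≤ Real.exp (-(x - y) ^ 2 / (2 * t)) := by
      apply Real.exp_le_exp.mpr
      rw [le_div_iff₀ (by positivity : (0:ℝ) < 2 * t)]
      linarith
    exact div_le_div_of_nonneg_right hexp h4t.le
  -- split the integral
  have hi : ∀ u v : ℝ, IntervalIntegrable (fun y => (pG t x y) ^ 2) MeasureTheory.volume u v :=
    fun u v => hc.intervalIntegrable u v
  have hsplit : (∫ y in ε..(L - ε), (pG t x y) ^ 2)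
      = (∫ y in ε..a, (pG t x y) ^ 2) + (∫ y in a..(a + s), (pG t x y) ^ 2)
        + (∫ y in (a + s)..(L - ε), (pG t x y) ^ 2) := by
    rw [intervalIntegral.integral_add_adjacent_intervals (hi ε a) (hi a (a + s)),
      intervalIntegral.integral_add_adjacent_intervals (hi ε (a + s)) (hi (a + s) (L - ε))]
  have h01 : 0 ≤ ∫ y in ε..a, (pG t x y) ^ 2 :=
    intervalIntegral.integral_nonneg ha1 (fun y _ => hnn y)
  have h02 : 0 ≤ ∫ y in (a + s)..(L - ε), (pG t x y) ^ 2 :=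
    intervalIntegral.integral_nonneg ha2 (fun y _ => hnn y)
  have hmid : s * c ≤ ∫ y in a..(a + s), (pG t x y) ^ 2 := by
    have : (∫ y in a..(a + s), c) ≤ ∫ y in a..(a + s), (pG t x y) ^ 2 := by
      apply intervalIntegral.integral_mono_on (by linarith) (intervalIntegrable_const) (hi a (a + s))
      exact key
    rwa [intervalIntegral.integral_const, smul_eq_mul, add_sub_cancel_left] at this
  have hfin : s * c = Real.exp (-1 / 2) / (4 * Real.pi * s) := by
    rw [hc', ← hst]
    field_simp
  rw [ge_iff_le, hsplit, ← hfin]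
  linarith
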